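/- For every nonempty set V ⊆ ℤ, every q ∈ (2,4) and every μ > 0, the ground-state level is strictly negative: 𝓔_{q,V}(μ) < 0. -/

import Mathlib

open MeasureTheory

/-- `u` is (the continuous representative of) an `H¹(ℝ)` function with weak
derivative `u'`: both `u` and `u'` are square-integrable and `u` is a
primitive of `u'`. -/
def InH1 (u u' : ℝ → ℝ) : Prop :=
  Integrable (fun x => (u x) ^ 2) ∧ Integrable (fun x => (u' x) ^ 2) ∧
    ∀ a b : ℝ, u b - u a = ∫ x in a..b, u' x

/-- The mass `∫_ℝ u²`. -/
noncomputable def mass (u : ℝ → ℝ) : ℝ := ∫ x : ℝ, (u x) ^ 2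

/-- The energy `E_{q,V}(u) = (1/2)∫ |u'|² − (1/q)∑_{v ∈ V} |u(v)|^q`,
for a set of vertices `V ⊆ ℤ`. -/
noncomputable def energy (q : ℝ) (V : Set ℤ) (u u' : ℝ → ℝ) : ℝ :=
  (1 / 2) * (∫ x : ℝ, (u' x) ^ 2) - (1 / q) * ∑' v : V, |u ((v : ℤ) : ℝ)| ^ q

/-- The set of energies of `H¹` functions of mass `μ`;
its infimum is the ground-state level `𝓔_{q,V}(μ)`. -/
def levelSet (q : ℝ) (V : Set ℤ) (μ : ℝ) : Set ℝ :=
  {E | ∃ u u' : ℝ → ℝ, InH1 u u' ∧ mass u = μ ∧ E = energy q V u u'}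

section AuxLemmas
open Set

lemma rpow_sq_half (x q : ℝ) (hx : 0 ≤ x) : (x ^ 2) ^ (q / 2) = x ^ q := by
  rw [← Real.rpow_natCast x 2, ← Real.rpow_mul hx]
  norm_num
  congr 1
  ring

lemma abs_rpow_eq_sq_half (x q : ℝ) : |x| ^ q = (x ^ 2) ^ (q / 2) := by
  rw [← sq_abs x, rpow_sq_half _ _ (abs_nonneg x)]

lemma absIntegrableOn (f : ℝ → ℝ) (hf : Integrable (fun x => f x ^ 2))
    (s : Set ℝ) (hvol : volume s ≠ ⊤) :
    IntegrableOn (fun x => |f x|) s := by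
  have hmeas : AEStronglyMeasurable (fun x => |f x|) volume := by
    have h : (fun x => |f x|) = fun x => Real.sqrt (f x ^ 2) :=
      funext fun x => (Real.sqrt_sq_eq_abs _).symm
    rw [h]
    exact Real.continuous_sqrt.comp_aestronglyMeasurable hf.aestronglyMeasurable
  have hbnd : IntegrableOn (fun x => (1 + f x ^ 2) / 2) s :=
    ((integrableOn_const hvol).add hf.integrableOn).div_const 2
  refine hbnd.mono' hmeas.restrict ?_
  filter_upwards with x
  rw [Real.norm_eq_abs, abs_abs]
  nlinarith [sq_nonneg (|f x| - 1), sq_abs (f x)]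

lemma sq_setIntegral_abs_le (f : ℝ → ℝ) (s : Set ℝ) (hs : MeasurableSet s)
    (hvol : volume s ≠ ⊤)
    (hf2 : IntegrableOn (fun x => f x ^ 2) s)
    (hfa : IntegrableOn (fun x => |f x|) s) :
    (∫ x in s, |f x|) ^ 2 ≤ (volume s).toReal * ∫ x in s, f x ^ 2 := by
  set L : ℝ := (volume s).toReal with hL
  have hL0 : 0 ≤ L := ENNReal.toReal_nonneg
  set J : ℝ := ∫ x in s, f x ^ 2 with hJ
  have hJ0 : 0 ≤ J := setIntegral_nonneg hs fun x _ => sq_nonneg _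
  set X : ℝ := ∫ x in s, |f x| with hX
  have hX0 : 0 ≤ X := setIntegral_nonneg hs fun x _ => abs_nonneg _
  rcases eq_or_lt_of_le hL0 with hL0' | hLpos
  · -- volume zero
    have hvol0 : volume s = 0 := by
      have h0 : (volume s).toReal = 0 := by rw [← hL]; exact hL0'.symm
      rcases (ENNReal.toReal_eq_zero_iff _).1 h0 with h | h
      · exact h
      · exact absurd h hvol
    have hX0' : X = 0 := by
      rw [hX, Measure.restrict_eq_zero.2 hvol0]
      simp
    rw [hX0', ← hL0']
    simp
  · -- main case
    have key : ∀ ε > (0:ℝ), X ^ 2 ≤ L * J + ε * L := by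
      intro ε hε
      set t : ℝ := Real.sqrt ((J + ε) / L) with ht
      have htpos : 0 < t := Real.sqrt_pos.2 (div_pos (by linarith) hLpos)
      have ht2 : t ^ 2 = (J + ε) / L := Real.sq_sqrt (le_of_lt (div_pos (by linarith) hLpos))
      have hpt : ∀ x ∈ s, |f x| ≤ t / 2 + (1 / (2 * t)) * f x ^ 2 := by
        intro x _
        have h1 : 0 ≤ (|f x| - t) ^ 2 := sq_nonneg _
        have h2 : |f x| ^ 2 = f x ^ 2 := sq_abs _
        have h3 : (0:ℝ) < 2 * t := by linarith
        have h4 : 2 * t * |f x| ≤ t ^ 2 + f x ^ 2 := by nlinarith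
        have h5 : |f x| = (2 * t * |f x|) / (2 * t) := by field_simp
        rw [h5]
        have h6 : (2 * t * |f x|) / (2 * t) ≤ (t ^ 2 + f x ^ 2) / (2 * t) := by gcongr
        refine h6.trans (le_of_eq ?_)
        field_simp
      -- integrate the pointwise bound
      have hconst : IntegrableOn (fun _ : ℝ => t / 2) s := by
        exact integrableOn_const hvol
      have hrhsint : IntegrableOn (fun x => t / 2 + (1 / (2 * t)) * f x ^ 2) s := by
        exact hconst.add (hf2.const_mul _)
      have hmono : X ≤ ∫ x in s, (t / 2 + (1 / (2 * t)) * f x ^ 2) :=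
        setIntegral_mono_on hfa hrhsint hs hpt
      have hcalc : ∫ x in s, (t / 2 + (1 / (2 * t)) * f x ^ 2) = (t / 2) * L + (1 / (2 * t)) * J := by
        rw [integral_add hconst (hf2.const_mul _), integral_const_mul, setIntegral_const, measureReal_def]
        rw [smul_eq_mul, mul_comm]
      have hXle : X ≤ (t / 2) * L + (1 / (2 * t)) * J := by
        rw [← hcalc]; exact hmono
      have hXle2 : X ≤ t * L := by
        have hJle : (1 / (2 * t)) * J ≤ (1 / (2 * t)) * (J + ε) := by
          have : (0:ℝ) < 1 / (2 * t) := by positivity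
          nlinarith
        have heq : (1 / (2 * t)) * (J + ε) = (t / 2) * L := by
          have : J + ε = t ^ 2 * L := by
            rw [ht2]; field_simp
          rw [this]; field_simp
        calc X ≤ (t / 2) * L + (1 / (2 * t)) * J := hXle
          _ ≤ (t / 2) * L + (t / 2) * L := by rw [← heq]; linarith [hJle]
          _ = t * L := by ring
      have : X ^ 2 ≤ (t * L) ^ 2 := by
        apply pow_le_pow_left₀ hX0 hXle2
      calc X ^ 2 ≤ (t * L) ^ 2 := this
        _ = t ^ 2 * L * L := by ring
        _ = ((J + ε) / L) * L * L := by rw [ht2]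
        _ = (J + ε) * L := by field_simp
        _ = L * J + ε * L := by ring
    -- conclude by letting ε → 0
    have : X ^ 2 ≤ L * J := by
      refine le_of_forall_pos_le_add fun ε hε => ?_
      have := key (ε / L) (div_pos hε hLpos)
      calc X ^ 2 ≤ L * J + (ε / L) * L := this
        _ = L * J + ε := by field_simp
    exact this

lemma vertex_bound (u u' : ℝ → ℝ) (hu2 : Integrable (fun x => u x ^ 2))
    (hu'2 : Integrable (fun x => u' x ^ 2))
    (hftc : ∀ a b : ℝ, u b - u a = ∫ x in a..b, u' x)
    (ℓ : ℝ) (hℓ : 0 < ℓ) (v : ℝ) :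
    u v ^ 2 ≤ (2 / ℓ) * (∫ x in Ioc v (v + ℓ), u x ^ 2)
      + 2 * ℓ * (∫ x in Ioc v (v + ℓ), u' x ^ 2) := by
  set I : Set ℝ := Ioc v (v + ℓ) with hI
  have hImeas : MeasurableSet I := measurableSet_Ioc
  have hIvol : volume I = ENNReal.ofReal ℓ := by
    rw [hI, Real.volume_Ioc]; congr 1; ring
  have hIvol' : volume I ≠ ⊤ := by rw [hIvol]; exact ENNReal.ofReal_ne_top
  have hIvolR : (volume I).toReal = ℓ := by rw [hIvol, ENNReal.toReal_ofReal hℓ.le]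
  have habsu : IntegrableOn (fun x => |u x|) I := absIntegrableOn u hu2 I hIvol'
  have habsu' : IntegrableOn (fun x => |u' x|) I := absIntegrableOn u' hu'2 I hIvol'
  set X : ℝ := ∫ x in I, |u x| with hX
  set Y : ℝ := ∫ x in I, |u' x| with hY
  have hY0 : 0 ≤ Y := setIntegral_nonneg hImeas fun x _ => abs_nonneg _
  -- pointwise bound on I
  have hpt : ∀ x ∈ I, |u v| ≤ |u x| + Y := by
    intro x hx
    have hvx : v ≤ x := le_of_lt hx.1
    have h1 : u v - u x = -(∫ t in v..x, u' t) := by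
      rw [← intervalIntegral.integral_symm]
      exact hftc x v
    have h2 : ‖∫ t in v..x, u' t‖ ≤ ∫ t in v..x, ‖u' t‖ :=
      intervalIntegral.norm_integral_le_integral_norm hvx
    have h3 : (∫ t in v..x, ‖u' t‖) = ∫ t in Ioc v x, |u' t| := by
      rw [intervalIntegral.integral_of_le hvx]
      simp [Real.norm_eq_abs]
    have h4 : (∫ t in Ioc v x, |u' t|) ≤ Y := by
      refine setIntegral_mono_set habsu' ?_ ?_
      · filter_upwards with t using abs_nonneg _
      · exact (Ioc_subset_Ioc_right hx.2).eventuallyLE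
    have h5 : |u v - u x| ≤ Y := by
      rw [h1, abs_neg, ← Real.norm_eq_abs]
      exact h2.trans (le_of_eq_of_le h3 h4)
    calc |u v| ≤ |u x| + |u v - u x| := by
          have := abs_sub_abs_le_abs_sub (u v) (u x)
          have h := abs_add_le (u x) (u v - u x)
          calc |u v| = |u x + (u v - u x)| := by ring_nf
            _ ≤ |u x| + |u v - u x| := abs_add_le _ _
      _ ≤ |u x| + Y := by linarith [h5]
  -- integrate over I
  have hconst : IntegrableOn (fun _ : ℝ => |u v|) I :=
    integrableOn_const hIvol'
  have hconstY : IntegrableOn (fun _ : ℝ => Y) I :=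
    integrableOn_const hIvol'
  have hmono : ∫ _ in I, |u v| ≤ ∫ x in I, (|u x| + Y) :=
    setIntegral_mono_on hconst (habsu.add hconstY) hImeas hpt
  have hlhs : (∫ _ in I, |u v|) = ℓ * |u v| := by
    rw [setIntegral_const, measureReal_def, hIvolR, smul_eq_mul]
  have hrhs : (∫ x in I, (|u x| + Y)) = X + ℓ * Y := by
    rw [integral_add habsu hconstY, setIntegral_const, measureReal_def, hIvolR, smul_eq_mul]
  have hkey : ℓ * |u v| ≤ X + ℓ * Y := by rw [← hlhs, ← hrhs]; exact hmono
  -- Cauchy-Schwarz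
  have hCSu : X ^ 2 ≤ ℓ * ∫ x in I, u x ^ 2 := by
    have := sq_setIntegral_abs_le u I hImeas hIvol' hu2.integrableOn habsu
    rwa [hIvolR] at this
  have hCSu' : Y ^ 2 ≤ ℓ * ∫ x in I, u' x ^ 2 := by
    have := sq_setIntegral_abs_le u' I hImeas hIvol' hu'2.integrableOn habsu'
    rwa [hIvolR] at this
  -- combine
  have hX0 : 0 ≤ X := setIntegral_nonneg hImeas fun x _ => abs_nonneg _
  have huv : |u v| ≤ X / ℓ + Y := by
    rw [div_add' _ _ _ (ne_of_gt hℓ), ← sub_nonneg]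
    have h := sub_nonneg.2 hkey
    calc (0:ℝ) ≤ (X + ℓ * Y - ℓ * |u v|) / ℓ := div_nonneg h hℓ.le
      _ = (X + Y * ℓ) / ℓ - |u v| := by field_simp
  have hsq : u v ^ 2 ≤ (X / ℓ + Y) ^ 2 := by
    rw [← sq_abs (u v)]
    exact pow_le_pow_left₀ (abs_nonneg _) huv 2
  have hexp : (X / ℓ + Y) ^ 2 ≤ 2 * (X / ℓ) ^ 2 + 2 * Y ^ 2 := by
    nlinarith [sq_nonneg (X / ℓ - Y)]
  have hfin : 2 * (X / ℓ) ^ 2 + 2 * Y ^ 2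
      ≤ (2 / ℓ) * (∫ x in I, u x ^ 2) + 2 * ℓ * (∫ x in I, u' x ^ 2) := by
    have h5 : (X / ℓ) ^ 2 ≤ (∫ x in I, u x ^ 2) / ℓ := by
      rw [div_pow]
      calc X ^ 2 / ℓ ^ 2 ≤ (ℓ * ∫ x in I, u x ^ 2) / ℓ ^ 2 := by gcongr
        _ = (∫ x in I, u x ^ 2) / ℓ := by field_simp
    have h7 : (2 / ℓ) * (∫ x in I, u x ^ 2) = 2 * ((∫ x in I, u x ^ 2) / ℓ) := by ring
    linarith [h5, hCSu', h7]
  linarith [hsq, hexp, hfin]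

lemma levelSet_bddBelow (q : ℝ) (V : Set ℤ) (μ : ℝ) (hq : 2 < q) (hq' : q < 4)
    (hμ : 0 < μ) : ∃ L : ℝ, ∀ E ∈ {E | ∃ u u' : ℝ → ℝ,
      (Integrable (fun x => (u x) ^ 2) ∧ Integrable (fun x => (u' x) ^ 2) ∧
        ∀ a b : ℝ, u b - u a = ∫ x in a..b, u' x) ∧ (∫ x : ℝ, (u x) ^ 2) = μ ∧
      E = (1 / 2) * (∫ x : ℝ, (u' x) ^ 2) - (1 / q) * ∑' v : V, |u ((v : ℤ) : ℝ)| ^ q}, L ≤ E := by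
  have hq0 : (0:ℝ) < q := by linarith
  set C₀ : ℝ := 2 * μ + 4 * Real.sqrt μ with hC₀def
  have hC₀ : 0 < C₀ := by positivity
  set c : ℝ := C₀ ^ (q / 2) / q with hcdef
  have hc : 0 < c := div_pos (Real.rpow_pos_of_pos hC₀ _) hq0
  set r : ℝ := q / 4 with hrdef
  have hr0 : 0 < r := by positivity
  have hr1 : r < 1 := by rw [hrdef]; linarith
  set T : ℝ := max 1 ((2 * c) ^ ((1 - r)⁻¹)) with hTdef
  have hT1 : (1:ℝ) ≤ T := le_max_left _ _
  have hT0 : (0:ℝ) < T := lt_of_lt_of_le one_pos hT1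
  refine ⟨-(c * T ^ r) - 1 / 2, ?_⟩
  rintro E ⟨u, u', ⟨hu2, hu'2, hftc⟩, hMu, rfl⟩
  set K : ℝ := ∫ x : ℝ, u' x ^ 2 with hKdef
  have hK0 : 0 ≤ K := integral_nonneg fun x => sq_nonneg _
  have hK1 : (0:ℝ) < K + 1 := by linarith
  set ℓ : ℝ := min 1 (Real.sqrt (μ / (K + 1))) with hℓdef
  have hb0 : 0 < Real.sqrt (μ / (K + 1)) := Real.sqrt_pos.2 (div_pos hμ hK1)
  have hℓ0 : 0 < ℓ := lt_min one_pos hb0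
  have hℓ1 : ℓ ≤ 1 := min_le_left _ _
  set B : ℝ := 2 * μ / ℓ + 2 * ℓ * K with hBdef
  have hB0 : 0 < B :=
    add_pos_of_pos_of_nonneg (div_pos (by linarith) hℓ0) (by positivity)
  -- per-vertex bound
  have hvert : ∀ w : ℤ, u (w : ℝ) ^ 2 ≤ (2 / ℓ) * (∫ x in Ioc (w:ℝ) ((w:ℝ) + ℓ), u x ^ 2)
      + 2 * ℓ * (∫ x in Ioc (w:ℝ) ((w:ℝ) + ℓ), u' x ^ 2) :=
    fun w => vertex_bound u u' hu2 hu'2 hftc ℓ hℓ0 (w : ℝ)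
  have hJ1le : ∀ w : ℤ, (∫ x in Ioc (w:ℝ) ((w:ℝ) + ℓ), u x ^ 2) ≤ μ := by
    intro w
    rw [← hMu]
    exact setIntegral_le_integral hu2 (Filter.Eventually.of_forall fun x => sq_nonneg _)
  have hJ2le : ∀ w : ℤ, (∫ x in Ioc (w:ℝ) ((w:ℝ) + ℓ), u' x ^ 2) ≤ K := by
    intro w
    exact setIntegral_le_integral hu'2 (Filter.Eventually.of_forall fun x => sq_nonneg _)
  have hvB : ∀ w : ℤ, u (w : ℝ) ^ 2 ≤ B := by
    intro w
    refine (hvert w).trans ?_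
    rw [hBdef]
    have h1 := hJ1le w
    have h2 := hJ2le w
    have h3 : (0:ℝ) < 2 / ℓ := by positivity
    have h4 : (0:ℝ) ≤ 2 * ℓ := by positivity
    have h5 : (2 / ℓ) * (∫ x in Ioc (w:ℝ) ((w:ℝ) + ℓ), u x ^ 2) ≤ (2 / ℓ) * μ :=
      mul_le_mul_of_nonneg_left h1 h3.le
    have h6 : 2 * ℓ * (∫ x in Ioc (w:ℝ) ((w:ℝ) + ℓ), u' x ^ 2) ≤ 2 * ℓ * K :=
      mul_le_mul_of_nonneg_left h2 h4
    have : (2 / ℓ) * μ = 2 * μ / ℓ := by ring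
    linarith
  -- sum over finitely many vertices
  have hsum2 : ∀ s : Finset V, (∑ v ∈ s, u ((v:ℤ) : ℝ) ^ 2) ≤ B := by
    intro s
    set t : V → Set ℝ := fun v => Ioc ((v:ℤ) : ℝ) (((v:ℤ) : ℝ) + ℓ) with htdef
    have hdisj : (↑s : Set V).Pairwise (Function.onFun Disjoint t) := by
      intro a _ b _ hab
      have hZ : (a:ℤ) ≠ (b:ℤ) := fun h => hab (Subtype.ext h)
      rw [Function.onFun, Set.disjoint_left]
      intro x hxa hxb
      rcases lt_or_gt_of_ne hZ with h | h
      · have : ((a:ℤ):ℝ) + 1 ≤ ((b:ℤ):ℝ) := by exact_mod_cast Int.add_one_le_iff.2 h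
        have h1 : x ≤ ((a:ℤ):ℝ) + ℓ := hxa.2
        have h2 : ((b:ℤ):ℝ) < x := hxb.1
        linarith
      · have : ((b:ℤ):ℝ) + 1 ≤ ((a:ℤ):ℝ) := by exact_mod_cast Int.add_one_le_iff.2 h
        have h1 : x ≤ ((b:ℤ):ℝ) + ℓ := hxb.2
        have h2 : ((a:ℤ):ℝ) < x := hxa.1
        linarith
    have hsum1 : (∑ v ∈ s, ∫ x in t v, u x ^ 2) ≤ μ := by
      rw [← integral_biUnion_finset s (fun i _ => measurableSet_Ioc) hdisj
        (fun i _ => hu2.integrableOn)]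
      rw [← hMu]
      exact setIntegral_le_integral hu2 (Filter.Eventually.of_forall fun x => sq_nonneg _)
    have hsum1' : (∑ v ∈ s, ∫ x in t v, u' x ^ 2) ≤ K := by
      rw [← integral_biUnion_finset s (fun i _ => measurableSet_Ioc) hdisj
        (fun i _ => hu'2.integrableOn)]
      exact setIntegral_le_integral hu'2 (Filter.Eventually.of_forall fun x => sq_nonneg _)
    calc (∑ v ∈ s, u ((v:ℤ) : ℝ) ^ 2)
        ≤ ∑ v ∈ s, ((2 / ℓ) * (∫ x in t v, u x ^ 2) + 2 * ℓ * (∫ x in t v, u' x ^ 2)) :=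
          Finset.sum_le_sum fun v _ => hvert (v:ℤ)
      _ = (2 / ℓ) * (∑ v ∈ s, ∫ x in t v, u x ^ 2) + 2 * ℓ * (∑ v ∈ s, ∫ x in t v, u' x ^ 2) := by
          rw [Finset.sum_add_distrib, Finset.mul_sum, Finset.mul_sum]
      _ ≤ (2 / ℓ) * μ + 2 * ℓ * K := by
          have h3 : (0:ℝ) ≤ 2 / ℓ := by positivity
          have h4 : (0:ℝ) ≤ 2 * ℓ := by positivity
          have hnn : (0:ℝ) ≤ ∑ v ∈ s, ∫ x in t v, u x ^ 2 := by
            exact Finset.sum_nonneg fun v _ =>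
              setIntegral_nonneg measurableSet_Ioc fun x _ => sq_nonneg _
          gcongr
      _ = B := by rw [hBdef]; ring
  -- bound on each partial sum of the nonlinear term
  have hFs : ∀ s : Finset V, (∑ v ∈ s, |u ((v:ℤ) : ℝ)| ^ q) ≤ B ^ (q / 2) := by
    intro s
    have hterm : ∀ v ∈ s, |u ((v:ℤ) : ℝ)| ^ q ≤ B ^ ((q - 2) / 2) * u ((v:ℤ) : ℝ) ^ 2 := by
      intro v _
      rw [abs_rpow_eq_sq_half]
      by_cases h : u ((v:ℤ) : ℝ) = 0
      · rw [h]
        rw [show ((0:ℝ) ^ 2) = (0:ℝ) by ring, Real.zero_rpow (by positivity : q / 2 ≠ 0)]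
        positivity
      · have hx2 : 0 < u ((v:ℤ) : ℝ) ^ 2 :=
          lt_of_le_of_ne (sq_nonneg _) (Ne.symm (pow_ne_zero 2 h))
        have hsplit : q / 2 = (q - 2) / 2 + 1 := by ring
        rw [hsplit, Real.rpow_add hx2, Real.rpow_one]
        have hb : (u ((v:ℤ) : ℝ) ^ 2) ^ ((q - 2) / 2) ≤ B ^ ((q - 2) / 2) :=
          Real.rpow_le_rpow (sq_nonneg _) (hvB (v:ℤ)) (by linarith)
        exact mul_le_mul_of_nonneg_right hb hx2.le
    calc (∑ v ∈ s, |u ((v:ℤ) : ℝ)| ^ q)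
        ≤ ∑ v ∈ s, B ^ ((q - 2) / 2) * u ((v:ℤ) : ℝ) ^ 2 := Finset.sum_le_sum hterm
      _ = B ^ ((q - 2) / 2) * ∑ v ∈ s, u ((v:ℤ) : ℝ) ^ 2 := by rw [Finset.mul_sum]
      _ ≤ B ^ ((q - 2) / 2) * B :=
          mul_le_mul_of_nonneg_left (hsum2 s) (Real.rpow_nonneg hB0.le _)
      _ = B ^ (q / 2) := by
          have h9 : B ^ ((q - 2) / 2) * B ^ (1:ℝ) = B ^ ((q - 2) / 2 + 1) :=
            (Real.rpow_add hB0 _ _).symm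
          rw [Real.rpow_one] at h9
          rw [h9, show (q - 2) / 2 + 1 = q / 2 by ring]
  -- bound the tsum
  have hS : (∑' v : V, |u ((v:ℤ) : ℝ)| ^ q) ≤ B ^ (q / 2) := by
    by_cases hsum : Summable fun v : V => |u ((v:ℤ) : ℝ)| ^ q
    · exact Summable.tsum_le_of_sum_le hsum hFs
    · rw [tsum_eq_zero_of_not_summable hsum]
      positivity
  -- bound B
  have hsqrt1 : (1:ℝ) ≤ Real.sqrt (K + 1) := by
    have h := Real.sqrt_le_sqrt (show (1:ℝ) ≤ K + 1 by linarith)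
    rwa [Real.sqrt_one] at h
  have hsdiv : Real.sqrt (μ / (K + 1)) = Real.sqrt μ / Real.sqrt (K + 1) :=
    Real.sqrt_div hμ.le _
  have h2ℓK : 2 * ℓ * K ≤ 2 * Real.sqrt μ * Real.sqrt (K + 1) := by
    have h1 : ℓ ≤ Real.sqrt μ / Real.sqrt (K + 1) := by
      rw [← hsdiv]; exact min_le_right _ _
    have h2 : 2 * ℓ * K ≤ 2 * (Real.sqrt μ / Real.sqrt (K + 1)) * (K + 1) := by
      have := mul_le_mul (mul_le_mul_of_nonneg_left h1 (by norm_num : (0:ℝ) ≤ 2))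
        (by linarith : K ≤ K + 1) hK0 (by positivity)
      linarith [this]
    have h3 : 2 * (Real.sqrt μ / Real.sqrt (K + 1)) * (K + 1)
        = 2 * Real.sqrt μ * ((K + 1) / Real.sqrt (K + 1)) := by ring
    have h4 : (K + 1) / Real.sqrt (K + 1) = Real.sqrt (K + 1) := Real.div_sqrt
    rw [h3, h4] at h2
    exact h2
  have h2μℓ : 2 * μ / ℓ ≤ 2 * μ + 2 * Real.sqrt μ * Real.sqrt (K + 1) := by
    rcases le_total 1 (Real.sqrt (μ / (K + 1))) with h | h
    · have : ℓ = 1 := min_eq_left h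
      rw [this]
      have : (0:ℝ) ≤ 2 * Real.sqrt μ * Real.sqrt (K + 1) := by positivity
      linarith
    · have hℓeq : ℓ = Real.sqrt (μ / (K + 1)) := min_eq_right h
      have hsμ : (0:ℝ) < Real.sqrt μ := Real.sqrt_pos.2 hμ
      have hsK : (0:ℝ) < Real.sqrt (K + 1) := Real.sqrt_pos.2 hK1
      have hμs : μ / Real.sqrt μ = Real.sqrt μ := Real.div_sqrt
      have heq : 2 * μ / ℓ = 2 * Real.sqrt μ * Real.sqrt (K + 1) := by
        rw [hℓeq, hsdiv, div_div_eq_mul_div, div_eq_iff (ne_of_gt hsμ)]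
        linear_combination (-2) * Real.sqrt (K + 1) * (Real.mul_self_sqrt hμ.le)
      rw [heq]
      have : (0:ℝ) ≤ 2 * μ := by linarith
      linarith
  have hBle : B ≤ C₀ * Real.sqrt (K + 1) := by
    have h1 : B ≤ 2 * μ + 4 * Real.sqrt μ * Real.sqrt (K + 1) := by
      rw [hBdef]; linarith
    refine h1.trans ?_
    rw [hC₀def]
    nlinarith [Real.sqrt_nonneg μ, hsqrt1, hμ]
  have hBr : B ^ (q / 2) ≤ C₀ ^ (q / 2) * (K + 1) ^ r := by
    have h1 : B ^ (q / 2) ≤ (C₀ * Real.sqrt (K + 1)) ^ (q / 2) :=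
      Real.rpow_le_rpow hB0.le hBle (by positivity)
    have h2 : (C₀ * Real.sqrt (K + 1)) ^ (q / 2)
        = C₀ ^ (q / 2) * (Real.sqrt (K + 1)) ^ (q / 2) :=
      Real.mul_rpow hC₀.le (Real.sqrt_nonneg _)
    have h3 : (Real.sqrt (K + 1)) ^ (q / 2) = (K + 1) ^ r := by
      rw [Real.sqrt_eq_rpow, ← Real.rpow_mul (by linarith : (0:ℝ) ≤ K + 1)]
      congr 1
      rw [hrdef]; ring
    rw [h2, h3] at h1
    exact h1
  -- final: energy lower bound
  have hEn : (1 / 2) * K - (1 / q) * (∑' v : V, |u ((v:ℤ) : ℝ)| ^ q)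
      ≥ K / 2 - c * (K + 1) ^ r := by
    have h1 : (1 / q) * (∑' v : V, |u ((v:ℤ) : ℝ)| ^ q) ≤ (1 / q) * (C₀ ^ (q / 2) * (K + 1) ^ r) :=
      mul_le_mul_of_nonneg_left (hS.trans hBr) (by positivity)
    have h2 : (1 / q) * (C₀ ^ (q / 2) * (K + 1) ^ r) = c * (K + 1) ^ r := by
      rw [hcdef]; ring
    rw [h2] at h1
    linarith
  have hfinal : -(c * T ^ r) - 1 / 2 ≤ K / 2 - c * (K + 1) ^ r := by
    rcases le_total (K + 1) T with h | h
    · have h1 : (K + 1) ^ r ≤ T ^ r := Real.rpow_le_rpow (by linarith) h hr0.le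
      have h2 : c * (K + 1) ^ r ≤ c * T ^ r := mul_le_mul_of_nonneg_left h1 hc.le
      linarith
    · have e1 : (K + 1) ^ r = (K + 1) * (K + 1) ^ (r - 1) := by
        have := Real.rpow_add hK1 1 (r - 1)
        rw [show (1:ℝ) + (r - 1) = r by ring] at this
        rw [this, Real.rpow_one]
      have e2 : (K + 1) ^ (r - 1) ≤ T ^ (r - 1) :=
        Real.rpow_le_rpow_of_nonpos hT0 h (by linarith)
      have f1 : 2 * c ≤ T ^ (1 - r) := by
        have hmax := Real.rpow_le_rpow (by positivity : (0:ℝ) ≤ (2 * c) ^ ((1 - r)⁻¹))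
          (le_max_right 1 ((2 * c) ^ ((1 - r)⁻¹))) (by linarith : (0:ℝ) ≤ 1 - r)
        have : ((2 * c) ^ ((1 - r)⁻¹)) ^ (1 - r) = 2 * c := by
          rw [← Real.rpow_mul (by positivity : (0:ℝ) ≤ 2 * c),
            inv_mul_cancel₀ (by linarith : (1:ℝ) - r ≠ 0), Real.rpow_one]
        rw [this] at hmax
        exact hmax
      have hT1r : 0 < T ^ (1 - r) := Real.rpow_pos_of_pos hT0 _
      have e3 : c * T ^ (r - 1) ≤ 1 / 2 := by
        have f2 : T ^ (r - 1) = (T ^ (1 - r))⁻¹ := by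
          rw [show r - 1 = -(1 - r) by ring, Real.rpow_neg hT0.le]
        rw [f2]
        have f3 : (T ^ (1 - r))⁻¹ ≤ (2 * c)⁻¹ :=
          inv_anti₀ (by positivity) f1
        have f4 : c * (2 * c)⁻¹ = 1 / 2 := by field_simp
        calc c * (T ^ (1 - r))⁻¹ ≤ c * (2 * c)⁻¹ := mul_le_mul_of_nonneg_left f3 hc.le
          _ = 1 / 2 := f4
      have e4 : c * (K + 1) ^ r ≤ (K + 1) * (1 / 2) := by
        rw [e1]
        have h5 : c * ((K + 1) * (K + 1) ^ (r - 1)) = (K + 1) * (c * (K + 1) ^ (r - 1)) := by ring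
        rw [h5]
        have h6 : c * (K + 1) ^ (r - 1) ≤ c * T ^ (r - 1) := mul_le_mul_of_nonneg_left e2 hc.le
        have h7 : c * (K + 1) ^ (r - 1) ≤ 1 / 2 := h6.trans e3
        exact mul_le_mul_of_nonneg_left h7 (by linarith)
      have h8 : (0:ℝ) ≤ c * T ^ r := by positivity
      linarith [e4, h8]
  linarith [hEn, hfinal]

lemma exists_neg_energy (V : Set ℤ) (hV : V.Nonempty) (q μ : ℝ) (hq : 2 < q) (hq' : q < 4)
    (hμ : 0 < μ) :
    ∃ u u' : ℝ → ℝ,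
      (Integrable (fun x => (u x) ^ 2) ∧ Integrable (fun x => (u' x) ^ 2) ∧
        ∀ a b : ℝ, u b - u a = ∫ x in a..b, u' x) ∧ (∫ x : ℝ, (u x) ^ 2) = μ ∧
      (1 / 2) * (∫ x : ℝ, (u' x) ^ 2) - (1 / q) * (∑' v : V, |u ((v : ℤ) : ℝ)| ^ q) < 0 := by
  obtain ⟨v₀, hv₀⟩ := hV
  set c : ℝ := (v₀ : ℝ) with hcdef
  have hq0 : (0:ℝ) < q := by linarith
  have h4q : (0:ℝ) < 4 - q := by linarith
  set sp : ℝ := (q - 2) / 2 with hspdef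
  have hs0 : 0 < sp := by rw [hspdef]; linarith
  set X : ℝ := q * (2 / μ) ^ sp with hXdef
  have hX0 : 0 < X := mul_pos hq0 (Real.rpow_pos_of_pos (by positivity) _)
  set δ : ℝ := max 1 ((X + 1) ^ (2 / (4 - q))) with hδdef
  have hδ1 : (1:ℝ) ≤ δ := le_max_left _ _
  have hδ0 : (0:ℝ) < δ := lt_of_lt_of_le one_pos hδ1
  set g : ℝ → ℝ := fun x => max 0 (1 - |x - c| / δ) with hgdef
  have hg_cont : Continuous g := by
    rw [hgdef]; fun_prop
  have hg_nonneg : ∀ x, 0 ≤ g x := fun x => le_max_left _ _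
  have hg_le_one : ∀ x, g x ≤ 1 := by
    intro x
    rw [hgdef]
    apply max_le (by norm_num)
    have : 0 ≤ |x - c| / δ := by positivity
    linarith
  have hg_zero : ∀ x, δ ≤ |x - c| → g x = 0 := by
    intro x hx
    rw [hgdef]
    apply max_eq_left
    have : 1 ≤ |x - c| / δ := (one_le_div hδ0).2 hx
    linarith
  have hgcs : HasCompactSupport g := by
    apply HasCompactSupport.intro (isCompact_Icc (a := c - δ) (b := c + δ))
    intro x hx
    rcases le_or_gt δ |x - c| with h | h
    · exact hg_zero x h
    · exfalso
      obtain ⟨h1, h2⟩ := abs_lt.1 h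
      exact hx (Set.mem_Icc.2 ⟨by linarith, by linarith⟩)
  have hg2_cs : HasCompactSupport fun x => g x ^ 2 := by
    have := hgcs.comp_left (g := fun y : ℝ => y ^ 2) (by norm_num)
    exact this
  have hg2int : Integrable (fun x => g x ^ 2) :=
    (hg_cont.pow 2).integrable_of_hasCompactSupport hg2_cs
  set I : ℝ := ∫ x : ℝ, g x ^ 2 with hIdef
  have hIccfin : volume (Icc c (c + 1/2)) < ⊤ := by
    rw [Real.volume_Icc]; exact ENNReal.ofReal_lt_top
  have hI_pos : (0:ℝ) < I := by
    have h1 : ∀ x ∈ Icc c (c + 1/2), (1/4 : ℝ) ≤ g x ^ 2 := by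
      intro x hx
      obtain ⟨hx1, hx2⟩ := Set.mem_Icc.1 hx
      have habs : |x - c| ≤ 1/2 := by rw [abs_le]; constructor <;> linarith
      have hdivle : |x - c| / δ ≤ 1/2 :=
        le_trans (div_le_self (abs_nonneg _) hδ1) habs
      have hgx : (1/2 : ℝ) ≤ g x := by
        rw [hgdef]
        exact le_trans (by linarith) (le_max_right _ _)
      nlinarith [hgx]
    have h2 : (1/8 : ℝ) ≤ ∫ x in Icc c (c + 1/2), g x ^ 2 := by
      have hmono := setIntegral_mono_on
        (integrableOn_const hIccfin.ne) hg2int.integrableOn measurableSet_Icc h1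
      rw [setIntegral_const, measureReal_def, Real.volume_Icc,
        show c + 1/2 - c = 1/2 by ring, ENNReal.toReal_ofReal (by norm_num),
        smul_eq_mul] at hmono
      linarith
    have h3 : (∫ x in Icc c (c + 1/2), g x ^ 2) ≤ I :=
      setIntegral_le_integral hg2int (Filter.Eventually.of_forall fun x => sq_nonneg _)
    linarith
  have hI_le : I ≤ 2 * δ := by
    have hind : ∀ x, g x ^ 2 ≤ (Icc (c - δ) (c + δ)).indicator (fun _ => (1:ℝ)) x := by
      intro x
      by_cases hx : x ∈ Icc (c - δ) (c + δ)
      · rw [indicator_of_mem hx]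
        nlinarith [hg_le_one x, hg_nonneg x]
      · rw [indicator_of_notMem hx]
        have hge : δ ≤ |x - c| := by
          rw [Set.mem_Icc] at hx
          push_neg at hx
          rcases le_or_gt (c - δ) x with h | h
          · have h2 := hx h
            exact le_trans (by linarith) (le_abs_self _)
          · exact le_trans (by linarith) (neg_le_abs _)
        rw [hg_zero x hge]
        norm_num
    have hint : Integrable ((Icc (c - δ) (c + δ)).indicator (fun _ => (1:ℝ))) := by
      rw [integrable_indicator_iff measurableSet_Icc]
      exact integrableOn_const
        (by rw [Real.volume_Icc]; exact ENNReal.ofReal_ne_top)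
    have hmono := integral_mono hg2int hint hind
    rw [integral_indicator_const _ measurableSet_Icc, measureReal_def, Real.volume_Icc,
      show c + δ - (c - δ) = 2 * δ by ring, ENNReal.toReal_ofReal (by positivity),
      smul_eq_mul, mul_one] at hmono
    exact hmono
  set A : ℝ := Real.sqrt (μ / I) with hAdef
  have hA0 : 0 < A := Real.sqrt_pos.2 (div_pos hμ hI_pos)
  have hA2 : A ^ 2 = μ / I := Real.sq_sqrt (le_of_lt (div_pos hμ hI_pos))
  set u : ℝ → ℝ := fun x => A * g x with hudef
  set u' : ℝ → ℝ := fun x =>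
    (A / δ) * (Ico (c - δ) c).indicator (fun _ => (1:ℝ)) x
      - (A / δ) * (Ico c (c + δ)).indicator (fun _ => (1:ℝ)) x with hu'def
  have husq : (fun x => u x ^ 2) = fun x => A ^ 2 * g x ^ 2 := by
    funext x; rw [hudef]; ring
  have hu2 : Integrable (fun x => u x ^ 2) := by
    rw [husq]; exact hg2int.const_mul _
  have hmass : (∫ x : ℝ, u x ^ 2) = μ := by
    rw [husq, integral_const_mul, ← hIdef, hA2]
    field_simp
  have hu'sq : ∀ x, u' x ^ 2
      = (A / δ) ^ 2 * (Ico (c - δ) (c + δ)).indicator (fun _ => (1:ℝ)) x := by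
    intro x
    rw [hu'def]
    beta_reduce
    by_cases h1 : x ∈ Ico (c - δ) c
    · have h2 : x ∉ Ico c (c + δ) := fun h => absurd h1.2 (not_lt.2 h.1)
      have h3 : x ∈ Ico (c - δ) (c + δ) := ⟨h1.1, lt_trans h1.2 (by linarith)⟩
      rw [indicator_of_mem h1, indicator_of_mem h3, indicator_of_notMem h2]
      ring
    · by_cases h2 : x ∈ Ico c (c + δ)
      · have h3 : x ∈ Ico (c - δ) (c + δ) := ⟨le_trans (by linarith) h2.1, h2.2⟩
        rw [indicator_of_mem h3, indicator_of_mem h2, indicator_of_notMem h1]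
        ring
      · have h3 : x ∉ Ico (c - δ) (c + δ) := by
          intro h
          rcases lt_or_ge x c with h4 | h4
          · exact h1 ⟨h.1, h4⟩
          · exact h2 ⟨h4, h.2⟩
        rw [indicator_of_notMem h1, indicator_of_notMem h2, indicator_of_notMem h3]
        ring
  have hindint : Integrable ((Ico (c - δ) (c + δ)).indicator (fun _ => (1:ℝ))) := by
    rw [integrable_indicator_iff measurableSet_Ico]
    exact integrableOn_const
      (by rw [Real.volume_Ico]; exact ENNReal.ofReal_ne_top)
  have hu'2 : Integrable (fun x => u' x ^ 2) := by
    have h : (fun x => u' x ^ 2)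
        = fun x => (A / δ) ^ 2 * (Ico (c - δ) (c + δ)).indicator (fun _ => (1:ℝ)) x :=
      funext hu'sq
    rw [h]; exact hindint.const_mul _
  have hKenergy : (∫ x : ℝ, u' x ^ 2) = (A / δ) ^ 2 * (2 * δ) := by
    have h : (fun x => u' x ^ 2)
        = fun x => (A / δ) ^ 2 * (Ico (c - δ) (c + δ)).indicator (fun _ => (1:ℝ)) x :=
      funext hu'sq
    rw [h, integral_const_mul, integral_indicator_const _ measurableSet_Ico, measureReal_def, Real.volume_Ico,
      show c + δ - (c - δ) = 2 * δ by ring, ENNReal.toReal_ofReal (by positivity),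
      smul_eq_mul, mul_one]
  have hu'int : Integrable u' := by
    have h1 : Integrable ((Ico (c - δ) c).indicator (fun _ => (1:ℝ))) := by
      rw [integrable_indicator_iff measurableSet_Ico]
      exact integrableOn_const
        (by rw [Real.volume_Ico]; exact ENNReal.ofReal_ne_top)
    have h2 : Integrable ((Ico c (c + δ)).indicator (fun _ => (1:ℝ))) := by
      rw [integrable_indicator_iff measurableSet_Ico]
      exact integrableOn_const
        (by rw [Real.volume_Ico]; exact ENNReal.ofReal_ne_top)
    rw [hu'def]
    exact (h1.const_mul _).sub (h2.const_mul _)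
  have hu_cont : Continuous u := by
    rw [hudef]; exact continuous_const.mul hg_cont
  -- the right-derivative property
  have hderiv : ∀ x : ℝ, HasDerivWithinAt u (u' x) (Set.Ioi x) x := by
    intro x
    rcases lt_or_ge x (c - δ) with hx1 | hx1
    · -- far left
      have hx0 : u' x = 0 := by
        rw [hu'def]
        beta_reduce
        rw [indicator_of_notMem (fun h : x ∈ Ico (c - δ) c => absurd h.1 (not_le.2 hx1)),
          indicator_of_notMem (fun h : x ∈ Ico c (c + δ) => absurd h.1 (by push_neg; linarith))]
        ring
      rw [hx0]
      have hev : u =ᶠ[nhds x] (fun _ => (0:ℝ)) := by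
        have hmem : ∀ᶠ y in nhds x, y ∈ Iio (c - δ) := isOpen_Iio.eventually_mem hx1
        filter_upwards [hmem] with y hy
        have hyy : y < c - δ := hy
        have habs : δ ≤ |y - c| := le_trans (by linarith) (neg_le_abs _)
        show u y = 0
        rw [hudef]
        show A * g y = 0
        rw [hg_zero y habs, mul_zero]
      exact ((hasDerivAt_const x (0:ℝ)).congr_of_eventuallyEq hev).hasDerivWithinAt
    · rcases lt_or_ge x c with hx2 | hx2
      · -- rising edge [c-δ, c)
        have hu'x : u' x = A / δ := by
          rw [hu'def]
          beta_reduce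
          rw [indicator_of_mem (Set.mem_Ico.mpr ⟨hx1, hx2⟩ : x ∈ Ico (c - δ) c),
            indicator_of_notMem (fun h : x ∈ Ico c (c + δ) => absurd h.1 (not_le.2 hx2))]
          ring
        rw [hu'x]
        have hL : HasDerivAt (fun y => A * (1 - (c - y) / δ)) (A / δ) x := by
          have h2 : HasDerivAt (fun y : ℝ => c - y) (-1) x := (hasDerivAt_id x).const_sub c
          have h3 := (h2.div_const δ).const_sub 1
          have h4 := h3.const_mul A
          exact h4.congr_deriv (by ring)
        have hx_eq : u x = A * (1 - (c - x) / δ) := by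
          rw [hudef]
          show A * g x = _
          have habs : |x - c| = c - x := by
            rw [abs_sub_comm]; exact abs_of_pos (by linarith)
          have h5 : g x = 1 - (c - x) / δ := by
            rw [hgdef]
            show max 0 (1 - |x - c| / δ) = _
            rw [habs]
            apply max_eq_right
            have : (c - x) / δ ≤ 1 := by
              rw [div_le_one hδ0]; linarith
            linarith
          rw [h5]
        have hev : u =ᶠ[nhdsWithin x (Set.Ioi x)] (fun y => A * (1 - (c - y) / δ)) := by
          have hmem : ∀ᶠ y in nhdsWithin x (Set.Ioi x), y ∈ Iio c :=
            (isOpen_Iio.eventually_mem hx2).filter_mono nhdsWithin_le_nhds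
          filter_upwards [hmem, self_mem_nhdsWithin] with y hy1 hy2
          have hy3 : x < y := hy2
          have hy4 : y < c := hy1
          show u y = _
          rw [hudef]
          show A * g y = _
          have habs : |y - c| = c - y := by
            rw [abs_sub_comm]; exact abs_of_pos (by linarith)
          have h5 : g y = 1 - (c - y) / δ := by
            rw [hgdef]
            show max 0 (1 - |y - c| / δ) = _
            rw [habs]
            apply max_eq_right
            have : (c - y) / δ ≤ 1 := by
              rw [div_le_one hδ0]; linarith
            linarith
          rw [h5]
        exact (hL.hasDerivWithinAt).congr_of_eventuallyEq hev hx_eq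
      · rcases lt_or_ge x (c + δ) with hx3 | hx3
        · -- falling edge [c, c+δ)
          have hu'x : u' x = -(A / δ) := by
            rw [hu'def]
            beta_reduce
            rw [indicator_of_notMem (fun h : x ∈ Ico (c - δ) c => absurd h.2 (not_lt.2 hx2)),
              indicator_of_mem (Set.mem_Ico.mpr ⟨hx2, hx3⟩ : x ∈ Ico c (c + δ))]
            ring
          rw [hu'x]
          have hL : HasDerivAt (fun y => A * (1 - (y - c) / δ)) (-(A / δ)) x := by
            have h2 : HasDerivAt (fun y : ℝ => y - c) 1 x := (hasDerivAt_id x).sub_const c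
            have h3 := (h2.div_const δ).const_sub 1
            have h4 := h3.const_mul A
            exact h4.congr_deriv (by ring)
          have hx_eq : u x = A * (1 - (x - c) / δ) := by
            rw [hudef]
            show A * g x = _
            have habs : |x - c| = x - c := abs_of_nonneg (by linarith)
            have h5 : g x = 1 - (x - c) / δ := by
              rw [hgdef]
              show max 0 (1 - |x - c| / δ) = _
              rw [habs]
              apply max_eq_right
              have : (x - c) / δ ≤ 1 := by
                rw [div_le_one hδ0]; linarith
              linarith
            rw [h5]
          have hev : u =ᶠ[nhdsWithin x (Set.Ioi x)] (fun y => A * (1 - (y - c) / δ)) := by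
            have hmem : ∀ᶠ y in nhdsWithin x (Set.Ioi x), y ∈ Iio (c + δ) :=
              (isOpen_Iio.eventually_mem hx3).filter_mono nhdsWithin_le_nhds
            filter_upwards [hmem, self_mem_nhdsWithin] with y hy1 hy2
            have hy3 : x < y := hy2
            have hy4 : y < c + δ := hy1
            show u y = _
            rw [hudef]
            show A * g y = _
            have habs : |y - c| = y - c := abs_of_nonneg (by linarith)
            have h5 : g y = 1 - (y - c) / δ := by
              rw [hgdef]
              show max 0 (1 - |y - c| / δ) = _
              rw [habs]
              apply max_eq_right
              have : (y - c) / δ ≤ 1 := by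
                rw [div_le_one hδ0]; linarith
              linarith
            rw [h5]
          exact (hL.hasDerivWithinAt).congr_of_eventuallyEq hev hx_eq
        · -- far right
          have hx0 : u' x = 0 := by
            rw [hu'def]
            beta_reduce
            rw [indicator_of_notMem (fun h : x ∈ Ico (c - δ) c => absurd h.2 (by push_neg; linarith)),
              indicator_of_notMem (fun h : x ∈ Ico c (c + δ) => absurd h.2 (not_lt.2 hx3))]
            ring
          rw [hx0]
          have hx_eq : u x = 0 := by
            rw [hudef]
            show A * g x = 0
            have habs : δ ≤ |x - c| := le_trans (by linarith) (le_abs_self _)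
            rw [hg_zero x habs, mul_zero]
          have hev : u =ᶠ[nhdsWithin x (Set.Ioi x)] (fun _ => (0:ℝ)) := by
            filter_upwards [self_mem_nhdsWithin] with y hy
            have hy2 : x < y := hy
            have habs : δ ≤ |y - c| := le_trans (by linarith) (le_abs_self _)
            show u y = 0
            rw [hudef]
            show A * g y = 0
            rw [hg_zero y habs, mul_zero]
          exact ((hasDerivAt_const x (0:ℝ)).hasDerivWithinAt).congr_of_eventuallyEq hev hx_eq
  have hftc : ∀ a b : ℝ, u b - u a = ∫ x in a..b, u' x := by
    intro a b
    exact (intervalIntegral.integral_eq_sub_of_hasDeriv_right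
      hu_cont.continuousOn (fun x _ => hderiv x) hu'int.intervalIntegrable).symm
  -- the nonlinear term
  set N : ℤ := ⌈δ⌉ with hNdef
  have hNδ : δ ≤ (N : ℝ) := Int.le_ceil δ
  set F : V → ℝ := fun v => |u ((v : ℤ) : ℝ)| ^ q with hFdef
  have hFzero : ∀ v : V, (v : ℤ) ∉ Finset.Icc (v₀ - N) (v₀ + N) → F v = 0 := by
    intro v hv
    rw [Finset.mem_Icc] at hv
    push_neg at hv
    have hfar : δ ≤ |((v : ℤ) : ℝ) - c| := by
      rcases lt_or_ge (v : ℤ) (v₀ - N) with h | h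
      · have h1 : ((v : ℤ) : ℝ) + 1 ≤ (v₀ : ℝ) - (N : ℝ) := by
          exact_mod_cast Int.add_one_le_iff.2 h
        have : δ ≤ c - ((v : ℤ) : ℝ) := by rw [hcdef]; linarith
        exact le_trans this (by rw [abs_sub_comm]; exact le_abs_self _)
      · have h2 := hv h
        have h1 : (v₀ : ℝ) + (N : ℝ) + 1 ≤ ((v : ℤ) : ℝ) := by
          exact_mod_cast Int.add_one_le_iff.2 h2
        have : δ ≤ ((v : ℤ) : ℝ) - c := by rw [hcdef]; linarith
        exact le_trans this (le_abs_self _)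
    rw [hFdef]
    show |u ((v : ℤ) : ℝ)| ^ q = 0
    rw [hudef]
    show |A * g ((v : ℤ) : ℝ)| ^ q = 0
    rw [hg_zero _ hfar, mul_zero, abs_zero]
    exact Real.zero_rpow (ne_of_gt hq0)
  have hsummable : Summable F := by
    classical
    apply summable_of_ne_finset_zero (s := (Finset.Icc (v₀ - N) (v₀ + N)).subtype (· ∈ V))
    intro v hv
    apply hFzero
    intro hmem
    exact hv (Finset.mem_subtype.2 hmem)
  have hv₀F : F ⟨v₀, hv₀⟩ = A ^ q := by
    show |u ((v₀ : ℤ) : ℝ)| ^ q = A ^ q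
    have hzero : |((v₀ : ℤ) : ℝ) - c| = 0 := by rw [hcdef]; simp
    have hgc : g ((v₀ : ℤ) : ℝ) = 1 := by
      rw [hgdef]
      show max 0 (1 - |((v₀ : ℤ) : ℝ) - c| / δ) = 1
      rw [hzero]
      norm_num
    rw [hudef]
    show |A * g ((v₀ : ℤ) : ℝ)| ^ q = A ^ q
    rw [hgc, mul_one, abs_of_pos hA0]
  have hStsum : A ^ q ≤ ∑' v : V, F v := by
    have := Summable.le_tsum hsummable ⟨v₀, hv₀⟩
      (fun v' _ => Real.rpow_nonneg (abs_nonneg _) q)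
    rwa [hv₀F] at this
  -- final numeric inequality
  have hAq : A ^ q = (A ^ 2) ^ sp * A ^ 2 := by
    rw [← rpow_sq_half A q hA0.le,
      show q / 2 = sp + 1 by rw [hspdef]; ring,
      Real.rpow_add (pow_pos hA0 2), Real.rpow_one]
  have hA2ge : μ / (2 * δ) ≤ A ^ 2 := by
    rw [hA2]
    exact div_le_div_of_nonneg_left hμ.le hI_pos hI_le
  have hd1 : X + 1 ≤ δ ^ ((4 - q) / 2) := by
    have h := Real.rpow_le_rpow (by positivity : (0:ℝ) ≤ (X + 1) ^ (2 / (4 - q)))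
      (le_max_right 1 ((X + 1) ^ (2 / (4 - q)))) (by positivity : (0:ℝ) ≤ (4 - q) / 2)
    have heq : ((X + 1) ^ (2 / (4 - q))) ^ ((4 - q) / 2) = X + 1 := by
      rw [← Real.rpow_mul (by positivity : (0:ℝ) ≤ X + 1),
        show 2 / (4 - q) * ((4 - q) / 2) = 1 by field_simp, Real.rpow_one]
    rw [heq] at h
    exact h
  have hqlt : q < (μ / 2) ^ sp * δ ^ ((4 - q) / 2) := by
    have hprod : (μ / 2) ^ sp * (2 / μ) ^ sp = 1 := by
      rw [← Real.mul_rpow (by positivity) (by positivity),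
        show μ / 2 * (2 / μ) = 1 by field_simp, Real.one_rpow]
    have hq_eq : (μ / 2) ^ sp * X = q := by
      rw [hXdef]
      calc (μ / 2) ^ sp * (q * (2 / μ) ^ sp) = q * ((μ / 2) ^ sp * (2 / μ) ^ sp) := by ring
        _ = q := by rw [hprod, mul_one]
    have h1 : (μ / 2) ^ sp * X < (μ / 2) ^ sp * (X + 1) :=
      mul_lt_mul_of_pos_left (lt_add_one X) (Real.rpow_pos_of_pos (by positivity) _)
    have h2 : (μ / 2) ^ sp * (X + 1) ≤ (μ / 2) ^ sp * δ ^ ((4 - q) / 2) :=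
      mul_le_mul_of_nonneg_left hd1 (Real.rpow_nonneg (by positivity) _)
    linarith [hq_eq ▸ h1, h2]
  have hkey : q / δ < (A ^ 2) ^ sp := by
    have h1 : δ ^ ((4 - q) / 2) = δ * (δ ^ sp)⁻¹ := by
      have : (4 - q) / 2 = 1 + -sp := by rw [hspdef]; ring
      rw [this, Real.rpow_add hδ0, Real.rpow_one, Real.rpow_neg hδ0.le]
    have h2 : (μ / (2 * δ)) ^ sp = (μ / 2) ^ sp * (δ ^ sp)⁻¹ := by
      rw [show μ / (2 * δ) = (μ / 2) / δ by ring,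
        Real.div_rpow (by positivity) hδ0.le]
      rw [div_eq_mul_inv]
    have h3 : q < (μ / 2) ^ sp * (δ ^ sp)⁻¹ * δ := by
      rw [h1] at hqlt
      linarith [hqlt]
    have h4 : q / δ < (μ / (2 * δ)) ^ sp := by
      rw [div_lt_iff₀ hδ0, h2]
      exact h3
    have h5 : (μ / (2 * δ)) ^ sp ≤ (A ^ 2) ^ sp :=
      Real.rpow_le_rpow (by positivity) hA2ge hs0.le
    linarith
  have hmain : A ^ 2 / δ - (1 / q) * A ^ q < 0 := by
    rw [hAq]
    have hA2pos : (0:ℝ) < A ^ 2 := pow_pos hA0 2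
    have h2 : 1 / δ < (A ^ 2) ^ sp / q := by
      rw [div_lt_div_iff₀ hδ0 hq0]
      have := (div_lt_iff₀ hδ0).1 hkey
      linarith
    have h3 := mul_lt_mul_of_pos_left h2 hA2pos
    have e1 : A ^ 2 / δ = A ^ 2 * (1 / δ) := by ring
    have e2 : (1 / q) * ((A ^ 2) ^ sp * A ^ 2) = A ^ 2 * ((A ^ 2) ^ sp / q) := by ring
    linarith
  refine ⟨u, u', ⟨hu2, hu'2, hftc⟩, hmass, ?_⟩
  have hEform : (1 / 2) * (∫ x : ℝ, u' x ^ 2) = A ^ 2 / δ := by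
    rw [hKenergy]
    field_simp
  have htS : (1 / q) * A ^ q ≤ (1 / q) * (∑' v : V, F v) :=
    mul_le_mul_of_nonneg_left hStsum (by positivity)
  have heq : (∑' v : V, |u ((v : ℤ) : ℝ)| ^ q) = ∑' v : V, F v := rfl
  rw [heq, hEform]
  linarith

end AuxLemmas

section AuxOpen
open Set
end AuxOpen

/-- For every nonempty `V ⊆ ℤ`, `q ∈ (2,4)` and `μ > 0`, the ground-state level
`𝓔_{q,V}(μ)` is strictly negative. -/
theorem stmt2 (V : Set ℤ) (hV : V.Nonempty) (q μ : ℝ) (hq : 2 < q) (hq' : q < 4)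
    (hμ : 0 < μ) : sInf (levelSet q V μ) < 0 := by
  obtain ⟨u, u', hIn, hmass, hneg⟩ := exists_neg_energy V hV q μ hq hq' hμ
  have hmem : energy q V u u' ∈ levelSet q V μ := ⟨u, u', hIn, hmass, rfl⟩
  obtain ⟨L, hL⟩ := levelSet_bddBelow q V μ hq hq' hμ
  have hbdd : BddBelow (levelSet q V μ) := by
    refine ⟨L, ?_⟩
    rintro E ⟨w, w', hw, hmw, rfl⟩
    exact hL _ ⟨w, w', ⟨hw.1, hw.2.1, hw.2.2⟩, hmw, rfl⟩
  have h1 : sInf (levelSet q V μ) ≤ energy q V u u' := csInf_le hbdd hmem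
  have h2 : energy q V u u' < 0 := hneg
  exact lt_of_le_of_lt h1 h2
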